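/- Let ρ₁, ρ₂, ρ₃ be complex numbers with ρ₁ + ρ₂ + ρ₃ = 0. Then |ρ₁|⁴ + |ρ₂|⁴ + |ρ₃|⁴ = (1/2)(|ρ₁|² + |ρ₂|² + |ρ₃|²)² − 2·(Im(ρ₁·conj(ρ₂)))². -/

import Mathlib

/-- The identity `χ = 2ξ² − 2κ²` underlying the diagram analysis of type I classes:
`Σ|ρᵢ|⁴ = (1/2)(Σ|ρᵢ|²)² − 2(Im(ρ₁·conj ρ₂))²`. -/
theorem belRobinson_chi_xi_kappa_identity (ρ₁ ρ₂ ρ₃ : ℂ) (hsum : ρ₁ + ρ₂ + ρ₃ = 0) :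
    ‖ρ₁‖ ^ 4 + ‖ρ₂‖ ^ 4 + ‖ρ₃‖ ^ 4 =
      (1/2) * (‖ρ₁‖ ^ 2 + ‖ρ₂‖ ^ 2 + ‖ρ₃‖ ^ 2) ^ 2 -
        2 * (ρ₁ * (starRingEnd ℂ) ρ₂).im ^ 2 := by
  have h3 : ρ₃ = -(ρ₁ + ρ₂) := by linear_combination hsum
  have habs : ∀ z : ℂ, ‖z‖ ^ 2 = z.re ^ 2 + z.im ^ 2 := by
    intro z
    rw [Complex.sq_norm, Complex.normSq_apply]; ring
  have h4 : ∀ z : ℂ, ‖z‖ ^ 4 = (z.re ^ 2 + z.im ^ 2) ^ 2 := by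
    intro z; rw [show (4:ℕ) = 2*2 from rfl, pow_mul, habs]
  rw [h4, h4, h4, habs, habs, habs, h3]
  simp [Complex.mul_im, Complex.add_re, Complex.add_im, Complex.conj_re, Complex.conj_im]
  ring
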